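/- Define the rising diagonal sums d(n) = Σ_{k=0}^{⌊n/2⌋} A(n−k,k) of the binary binomial interpolated triangle. Then for all n ≥ 6: d(n) = α·d(n-1) + (β+𝓐)·d(n-2) − α𝓐·d(n-3) + (𝓑 − β𝓐)·d(n-4) − α𝓑·d(n-5) − β𝓑·d(n-6), where 𝓐 = uα+2v and 𝓑 = u²β−uvα−v². -/

import Mathlib

theorem stmt_13 (u v α β : ℝ) (hu : u ≠ 0) (hv : v ≠ 0) (hα : α ≠ 0) (hβ : β ≠ 0)
    (a : ℕ → ℝ) (ha : ∀ n, 2 ≤ n → a n = α * a (n-1) + β * a (n-2))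
    (A : ℕ → ℕ → ℝ) (hA0 : ∀ n, A n 0 = a n)
    (hA : ∀ n k, 1 ≤ k → k ≤ n → A n k = u * A n (k-1) + v * A (n-1) (k-1))
    (d : ℕ → ℝ) (hd : ∀ n, d n = ∑ k ∈ Finset.range (n/2 + 1), A (n-k) k) :
    ∀ n, 6 ≤ n →
      d n = α * d (n-1) + (β + (u*α + 2*v)) * d (n-2)
        - α*(u*α + 2*v) * d (n-3)
        + ((u^2*β - u*v*α - v^2) - β*(u*α + 2*v)) * d (n-4)
        - α*(u^2*β - u*v*α - v^2) * d (n-5)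
        - β*(u^2*β - u*v*α - v^2) * d (n-6) := by
  -- L : the a-recurrence propagates across the triangle in each column k
  have L : ∀ k t, A (t+k+2) k = α * A (t+k+1) k + β * A (t+k) k := by
    intro k
    induction k with
    | zero =>
      intro t
      have h := ha (t+2) (by omega)
      rw [show t+2-1 = t+1 by omega, show t+2-2 = t by omega] at h
      simpa [hA0] using h
    | succ k ih =>
      intro t
      have h1 := hA (t+k+3) (k+1) (by omega) (by omega)
      have h2 := hA (t+k+2) (k+1) (by omega) (by omega)
      have h3 := hA (t+k+1) (k+1) (by omega) (by omega)
      rw [show k+1-1 = k by omega, show t+k+3-1 = t+k+2 by omega] at h1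
      rw [show k+1-1 = k by omega, show t+k+2-1 = t+k+1 by omega] at h2
      rw [show k+1-1 = k by omega, show t+k+1-1 = t+k by omega] at h3
      have i1 := ih (t+1)
      have i2 := ih t
      rw [show t+1+k+2 = t+k+3 by omega, show t+1+k+1 = t+k+2 by omega,
          show t+1+k = t+k+1 by omega] at i1
      rw [show t+(k+1)+2 = t+k+3 by omega, show t+(k+1)+1 = t+k+2 by omega,
          show t+(k+1) = t+k+1 by omega]
      rw [h1, h2, h3]
      linear_combination u * i1 + v * i2
  -- diagonal relations
  have R1 : ∀ m, A (m+1) (m+1) = u * A (m+1) m + v * A m m := by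
    intro m
    have h := hA (m+1) (m+1) (by omega) (by omega)
    rw [show m+1-1 = m by omega] at h
    exact h
  have R2 : ∀ m, A (m+2) (m+1) = (u*α+v) * A (m+1) m + u*β * A m m := by
    intro m
    have h := hA (m+2) (m+1) (by omega) (by omega)
    rw [show m+1-1 = m by omega, show m+2-1 = m+1 by omega] at h
    have l := L m 0
    rw [show 0+m+2 = m+2 by omega, show 0+m+1 = m+1 by omega, show 0+m = m by omega] at l
    rw [h, l]; ring
  have pE : ∀ m, A (m+2) (m+2) =
      (u*α+2*v) * A (m+1) (m+1) + (u^2*β-u*v*α-v^2) * A m m := by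
    intro m
    have a1 := R1 (m+1)
    rw [show m+1+1 = m+2 by omega] at a1
    rw [a1, R2 m, R1 m]; ring
  have qO : ∀ m, A (m+3) (m+2) - α * A (m+2) (m+2) =
      (u*α+2*v) * (A (m+2) (m+1) - α * A (m+1) (m+1))
      + (u^2*β-u*v*α-v^2) * (A (m+1) m - α * A m m) := by
    intro m
    have b2 := R2 (m+1)
    rw [show m+1+2 = m+3 by omega, show m+1+1 = m+2 by omega] at b2
    have b1 := R1 (m+1)
    rw [show m+1+1 = m+2 by omega] at b1
    rw [b2, b1, R2 m, R1 m]; ring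
  -- the (x^2 - αx - β) part applied to d collapses to a single diagonal term
  have feven : ∀ m, d (2*m+2) - α * d (2*m+1) - β * d (2*m) = A (m+1) (m+1) := by
    intro m
    rw [hd (2*m+2), hd (2*m+1), hd (2*m),
        show (2*m+2)/2+1 = m+2 by omega, show (2*m+1)/2+1 = m+1 by omega,
        show (2*m)/2+1 = m+1 by omega]
    rw [Finset.sum_range_succ, show 2*m+2-(m+1) = m+1 by omega]
    have key : ∀ k ∈ Finset.range (m+1),
        A (2*m+2-k) k = α * A (2*m+1-k) k + β * A (2*m-k) k := by
      intro k hk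
      simp only [Finset.mem_range] at hk
      have l := L k (2*(m-k))
      rw [show 2*(m-k)+k+2 = 2*m+2-k by omega, show 2*(m-k)+k+1 = 2*m+1-k by omega,
          show 2*(m-k)+k = 2*m-k by omega] at l
      exact l
    rw [Finset.sum_congr rfl key, Finset.sum_add_distrib, ← Finset.mul_sum, ← Finset.mul_sum]
    ring
  have fodd : ∀ m, d (2*m+3) - α * d (2*m+2) - β * d (2*m+1) =
      A (m+2) (m+1) - α * A (m+1) (m+1) := by
    intro m
    rw [hd (2*m+3), hd (2*m+2), hd (2*m+1),
        show (2*m+3)/2+1 = m+2 by omega, show (2*m+2)/2+1 = m+2 by omega,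
        show (2*m+1)/2+1 = m+1 by omega]
    rw [Finset.sum_range_succ (f := fun k => A (2*m+3-k) k), show 2*m+3-(m+1) = m+2 by omega]
    rw [Finset.sum_range_succ (f := fun k => A (2*m+2-k) k), show 2*m+2-(m+1) = m+1 by omega]
    have key : ∀ k ∈ Finset.range (m+1),
        A (2*m+3-k) k = α * A (2*m+2-k) k + β * A (2*m+1-k) k := by
      intro k hk
      simp only [Finset.mem_range] at hk
      have l := L k (2*(m-k)+1)
      rw [show 2*(m-k)+1+k+2 = 2*m+3-k by omega, show 2*(m-k)+1+k+1 = 2*m+2-k by omega,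
          show 2*(m-k)+1+k = 2*m+1-k by omega] at l
      exact l
    rw [Finset.sum_congr rfl key, Finset.sum_add_distrib, ← Finset.mul_sum, ← Finset.mul_sum]
    ring
  -- conclusion
  intro n hn
  obtain ⟨j, hj | hj⟩ : ∃ j, n = 2*j+6 ∨ n = 2*j+7 := ⟨(n-6)/2, by omega⟩
  · subst hj
    rw [show 2*j+6-1 = 2*j+5 by omega, show 2*j+6-2 = 2*j+4 by omega,
        show 2*j+6-3 = 2*j+3 by omega, show 2*j+6-4 = 2*j+2 by omega,
        show 2*j+6-5 = 2*j+1 by omega, show 2*j+6-6 = 2*j by omega]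
    have F2 := feven (j+2)
    rw [show 2*(j+2)+2 = 2*j+6 by omega, show 2*(j+2)+1 = 2*j+5 by omega,
        show 2*(j+2) = 2*j+4 by omega, show j+2+1 = j+3 by omega] at F2
    have F1 := feven (j+1)
    rw [show 2*(j+1)+2 = 2*j+4 by omega, show 2*(j+1)+1 = 2*j+3 by omega,
        show 2*(j+1) = 2*j+2 by omega, show j+1+1 = j+2 by omega] at F1
    have F0 := feven j
    have P := pE (j+1)
    rw [show j+1+2 = j+3 by omega, show j+1+1 = j+2 by omega] at P
    linear_combination F2 - (u*α+2*v) * F1 - (u^2*β-u*v*α-v^2) * F0 + P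
  · subst hj
    rw [show 2*j+7-1 = 2*j+6 by omega, show 2*j+7-2 = 2*j+5 by omega,
        show 2*j+7-3 = 2*j+4 by omega, show 2*j+7-4 = 2*j+3 by omega,
        show 2*j+7-5 = 2*j+2 by omega, show 2*j+7-6 = 2*j+1 by omega]
    have G2 := fodd (j+2)
    rw [show 2*(j+2)+3 = 2*j+7 by omega, show 2*(j+2)+2 = 2*j+6 by omega,
        show 2*(j+2)+1 = 2*j+5 by omega, show j+2+2 = j+4 by omega,
        show j+2+1 = j+3 by omega] at G2
    have G1 := fodd (j+1)
    rw [show 2*(j+1)+3 = 2*j+5 by omega, show 2*(j+1)+2 = 2*j+4 by omega,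
        show 2*(j+1)+1 = 2*j+3 by omega, show j+1+2 = j+3 by omega,
        show j+1+1 = j+2 by omega] at G1
    have G0 := fodd j
    rw [show 2*j+3 = 2*j+3 by omega] at G0
    have Q := qO (j+1)
    rw [show j+1+3 = j+4 by omega, show j+1+2 = j+3 by omega,
        show j+1+1 = j+2 by omega] at Q
    linear_combination G2 - (u*α+2*v) * G1 - (u^2*β-u*v*α-v^2) * G0 + Q
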